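/- For a Laurent polynomial ring ℤ[t^{±1}] and a finite abelian group M, the ℤ[t^{±1}]-module ℤ[t^{±1}] ⊗_ℤ M satisfies ⋂_{k≥0} (t−1)^k·(ℤ[t^{±1}] ⊗ M) = 0. -/

import Mathlib

open LaurentPolynomial TensorProduct Finsupp

namespace LaurentTensorAux

variable {M : Type*} [AddCommGroup M]

/-- The `ℤ`-linear equivalence `ℤ[t^{±1}] ⊗_ℤ M ≃ (ℤ →₀ M)`. -/
noncomputable def e (M : Type*) [AddCommGroup M] :
    TensorProduct ℤ (LaurentPolynomial ℤ) M ≃ₗ[ℤ] (ℤ →₀ M) :=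
  (TensorProduct.congr (AddMonoidAlgebra.coeffLinearEquiv ℤ) (LinearEquiv.refl ℤ M)).trans
    (TensorProduct.finsuppScalarLeft ℤ M ℤ)

lemma e_T_smul (z : TensorProduct ℤ (LaurentPolynomial ℤ) M) (j : ℤ) :
    e M ((T 1 : LaurentPolynomial ℤ) • z) j = e M z (j - 1) := by
  induction z using TensorProduct.induction_on with
  | zero => simp
  | tmul f m =>
      rw [TensorProduct.smul_tmul', smul_eq_mul]
      have key : ∀ g : LaurentPolynomial ℤ,
          e M (g ⊗ₜ m) = TensorProduct.finsuppScalarLeft ℤ M ℤ (g.coeff ⊗ₜ m) := fun g => rfl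
      rw [key, key]
      erw [TensorProduct.finsuppScalarLeft_apply_tmul_apply,
          TensorProduct.finsuppScalarLeft_apply_tmul_apply]
      congr 1
      show (AddMonoidAlgebra.single (1:ℤ) (1:ℤ) * f).coeff j = f.coeff (j - 1)
      rw [AddMonoidAlgebra.coeff_single_mul_apply]
      simp [sub_eq_neg_add]
  | add x y hx hy =>
      rw [smul_add, map_add, Finsupp.add_apply, hx, hy, ← Finsupp.add_apply, ← map_add]

/-- `u` denotes `t - 1`. -/
noncomputable def u : LaurentPolynomial ℤ := T 1 - 1

lemma e_u_smul (z : TensorProduct ℤ (LaurentPolynomial ℤ) M) (j : ℤ) :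
    e M (u • z) j = e M z (j - 1) - e M z j := by
  rw [u, sub_smul, one_smul, map_sub, Finsupp.sub_apply, e_T_smul]

lemma e_eq_zero_iff (z : TensorProduct ℤ (LaurentPolynomial ℤ) M) :
    e M z = 0 ↔ z = 0 := by
  constructor
  · intro h
    have := congrArg (e M).symm h
    simpa using this
  · rintro rfl; simp

lemma max_u_smul (y : TensorProduct ℤ (LaurentPolynomial ℤ) M) :
    (e M (u • y)).support.max = (e M y).support.max + 1 := by
  by_cases hy : y = 0
  · subst hy; simp
  have hne : (e M y).support.Nonempty := by
    rw [Finsupp.support_nonempty_iff, Ne, e_eq_zero_iff]; exact hy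
  set b := (e M y).support.max' hne with hbdef
  have hb : e M y b ≠ 0 := Finsupp.mem_support_iff.mp ((e M y).support.max'_mem hne)
  have htop : ∀ j : ℤ, b < j → e M y j = 0 := by
    intro j hj
    by_contra h
    exact absurd (Finset.le_max' _ j (Finsupp.mem_support_iff.mpr h)) (not_le.mpr hj)
  have hmem : b + 1 ∈ (e M (u • y)).support := by
    rw [Finsupp.mem_support_iff, e_u_smul]
    simpa [htop (b+1) (by omega)] using hb
  have hub : ∀ j ∈ (e M (u • y)).support, j ≤ b + 1 := by
    intro j hj
    by_contra h
    rw [Finsupp.mem_support_iff, e_u_smul, htop j (by omega), htop (j-1) (by omega)] at hj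
    simp at hj
  have h1 : (e M (u • y)).support.max = ((b + 1 : ℤ) : WithBot ℤ) := by
    refine le_antisymm (Finset.max_le ?_) (Finset.le_max hmem)
    intro a ha
    exact_mod_cast hub a ha
  rw [h1, ← Finset.coe_max' hne, ← hbdef]
  push_cast
  rfl

lemma min_u_smul (y : TensorProduct ℤ (LaurentPolynomial ℤ) M) :
    (e M (u • y)).support.min = (e M y).support.min := by
  by_cases hy : y = 0
  · subst hy; simp
  have hne : (e M y).support.Nonempty := by
    rw [Finsupp.support_nonempty_iff, Ne, e_eq_zero_iff]; exact hy
  set a := (e M y).support.min' hne with hadef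
  have ha : e M y a ≠ 0 := Finsupp.mem_support_iff.mp ((e M y).support.min'_mem hne)
  have hbot : ∀ j : ℤ, j < a → e M y j = 0 := by
    intro j hj
    by_contra h
    exact absurd (Finset.min'_le _ j (Finsupp.mem_support_iff.mpr h)) (not_le.mpr hj)
  have hmem : a ∈ (e M (u • y)).support := by
    rw [Finsupp.mem_support_iff, e_u_smul, hbot (a-1) (by omega)]
    simpa using ha
  have hlb : ∀ j ∈ (e M (u • y)).support, a ≤ j := by
    intro j hj
    by_contra h
    rw [Finsupp.mem_support_iff, e_u_smul, hbot j (by omega), hbot (j-1) (by omega)] at hj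
    simp at hj
  have h1 : (e M (u • y)).support.min = ((a : ℤ) : WithTop ℤ) := by
    refine le_antisymm (Finset.min_le hmem) (Finset.le_min ?_)
    intro x hx
    exact_mod_cast hlb x hx
  rw [h1, ← Finset.coe_min' hne]

lemma max_u_pow_smul (k : ℕ) (y : TensorProduct ℤ (LaurentPolynomial ℤ) M) :
    (e M (u ^ k • y)).support.max = (e M y).support.max + (k : ℤ) := by
  induction k with
  | zero => simp
  | succ n ih =>
      rw [pow_succ', mul_smul, max_u_smul, ih]
      push_cast
      rw [add_assoc]

lemma min_u_pow_smul (k : ℕ) (y : TensorProduct ℤ (LaurentPolynomial ℤ) M) :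
    (e M (u ^ k • y)).support.min = (e M y).support.min := by
  induction k with
  | zero => simp
  | succ n ih => rw [pow_succ', mul_smul, min_u_smul, ih]

end LaurentTensorAux

open LaurentTensorAux in
/-- For a finite abelian group `M`, the `ℤ[t^{±1}]`-module `ℤ[t^{±1}] ⊗_ℤ M`
satisfies `⋂_k (t − 1)^k · (ℤ[t^{±1}] ⊗ M) = 0`. -/
theorem iInf_t_sub_one_pow_smul_laurent_tensor_finite_eq_bot
    {M : Type*} [AddCommGroup M] [Finite M] :
    (⨅ k : ℕ,
      (Ideal.span {(LaurentPolynomial.T 1 - 1 : LaurentPolynomial ℤ)}) ^ k •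
        (⊤ : Submodule (LaurentPolynomial ℤ)
          (TensorProduct ℤ (LaurentPolynomial ℤ) M))) = ⊥ := by
  rw [eq_bot_iff]
  intro x hx
  rw [Submodule.mem_iInf] at hx
  have hx' : ∀ k : ℕ, ∃ y, x = (u : LaurentPolynomial ℤ) ^ k • y := by
    intro k
    have h := hx k
    rw [show (LaurentPolynomial.T 1 - 1 : LaurentPolynomial ℤ) = u from rfl,
      Ideal.span_singleton_pow] at h
    refine Submodule.smul_induction_on h ?_ ?_
    · intro r hr n _
      obtain ⟨c, rfl⟩ := Ideal.mem_span_singleton'.mp hr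
      exact ⟨c • n, by rw [mul_smul, smul_comm]⟩
    · rintro x y ⟨x', rfl⟩ ⟨y', rfl⟩
      exact ⟨x' + y', (smul_add _ _ _).symm⟩
  rw [Submodule.mem_bot]
  by_contra hx0
  have hne : (e M x).support.Nonempty := by
    rw [Finsupp.support_nonempty_iff, Ne, e_eq_zero_iff]; exact hx0
  set a := (e M x).support.min' hne with hadef
  set b := (e M x).support.max' hne with hbdef
  have hab : a ≤ b := Finset.min'_le _ _ ((e M x).support.max'_mem hne)
  set k : ℕ := (b - a).toNat + 1 with hkdef
  obtain ⟨y, hy⟩ := hx' k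
  have hy0 : y ≠ 0 := by
    rintro rfl
    exact hx0 (by simpa using hy)
  have hyne : (e M y).support.Nonempty := by
    rw [Finsupp.support_nonempty_iff, Ne, e_eq_zero_iff]; exact hy0
  set a' := (e M y).support.min' hyne with hadef'
  set b' := (e M y).support.max' hyne with hbdef'
  have ha'b' : a' ≤ b' := Finset.min'_le _ _ ((e M y).support.max'_mem hyne)
  have hmax : ((b : ℤ) : WithBot ℤ) = ((b' + (k : ℤ) : ℤ) : WithBot ℤ) := by
    rw [Finset.coe_max' hne, hy, max_u_pow_smul, ← Finset.coe_max' hyne]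
    push_cast
    rfl
  have hmin : ((a : ℤ) : WithTop ℤ) = ((a' : ℤ) : WithTop ℤ) := by
    rw [Finset.coe_min' hne, hy, min_u_pow_smul, ← Finset.coe_min' hyne]
  have hb : b = b' + (k : ℤ) := by exact_mod_cast hmax
  have ha : a = a' := by exact_mod_cast hmin
  omega
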